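/- For all real m₁, m₂, ν₁, ν₂ > 0, the function h(u,w) = K₀ · u^{(m₁+m₂)/2−1} · w^{m₁/2−1} · (1−w)^{m₂/2−1} · (1 + m₁uw/ν₁)^{−(m₁+ν₁)/2} · (1 + m₂u(1−w)/ν₂)^{−(m₂+ν₂)/2} is a probability density on (0,∞) × (0,1): ∫₀¹ ∫₀^∞ h(u,w) du dw = 1. -/

import Mathlib

open Real MeasureTheory Set

/-- Beta function `B(a,b) = Γ(a)Γ(b)/Γ(a+b)`. -/
noncomputable def Beta (a b : ℝ) : ℝ := Gamma a * Gamma b / Gamma (a + b)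

lemma Beta_pos {a b : ℝ} (ha : 0 < a) (hb : 0 < b) : 0 < Beta a b :=
  div_pos (mul_pos (Gamma_pos_of_pos ha) (Gamma_pos_of_pos hb)) (Gamma_pos_of_pos (by linarith))

lemma betaIntegrand_integrableOn {a b : ℝ} (ha : 0 < a) (hb : 0 < b) :
    IntegrableOn (fun x : ℝ => x ^ (a - 1) * (1 - x) ^ (b - 1)) (Ioo 0 1) := by
  have h := (Complex.betaIntegral_convergent (u := (a:ℂ)) (v := (b:ℂ)) (by simpa using ha)
    (by simpa using hb))
  rw [intervalIntegrable_iff_integrableOn_Ioc_of_le zero_le_one] at h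
  have h2 := (h.mono_set Ioo_subset_Ioc_self).re
  refine IntegrableOn.congr_fun h2 (fun x hx => ?_) measurableSet_Ioo
  obtain ⟨hx0, hx1⟩ := hx
  rw [show ((a:ℂ)-1) = ((a-1:ℝ):ℂ) by push_cast; ring,
    show ((b:ℂ)-1) = ((b-1:ℝ):ℂ) by push_cast; ring]
  rw [← Complex.ofReal_cpow hx0.le, ← Complex.ofReal_one, ← Complex.ofReal_sub,
    ← Complex.ofReal_cpow (by linarith), ← Complex.ofReal_mul]
  simp

lemma betaIntegrand_integral {a b : ℝ} (ha : 0 < a) (hb : 0 < b) :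
    ∫ x in Ioo (0:ℝ) 1, x ^ (a - 1) * (1 - x) ^ (b - 1) = Beta a b := by
  have key : Complex.betaIntegral a b = ((∫ x in Ioo (0:ℝ) 1, x ^ (a - 1) * (1 - x) ^ (b - 1) : ℝ) : ℂ) := by
    calc Complex.betaIntegral a b
        = ∫ x in Ioc (0:ℝ) 1, ((x ^ (a - 1) * (1 - x) ^ (b - 1) : ℝ) : ℂ) := by
          rw [Complex.betaIntegral, intervalIntegral.integral_of_le zero_le_one]
          refine setIntegral_congr_fun measurableSet_Ioc (fun x hx => ?_)
          obtain ⟨hx0, hx1⟩ := hx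
          rw [show ((a:ℂ)-1) = ((a-1:ℝ):ℂ) by push_cast; ring,
            show ((b:ℂ)-1) = ((b-1:ℝ):ℂ) by push_cast; ring]
          rw [← Complex.ofReal_cpow hx0.le, ← Complex.ofReal_one, ← Complex.ofReal_sub,
            ← Complex.ofReal_cpow (by linarith), ← Complex.ofReal_mul]
      _ = ((∫ x in Ioc (0:ℝ) 1, x ^ (a - 1) * (1 - x) ^ (b - 1) : ℝ) : ℂ) := integral_ofReal
      _ = _ := by rw [integral_Ioc_eq_integral_Ioo]
  have h := Complex.Gamma_mul_Gamma_eq_betaIntegral (s := (a:ℂ)) (t := (b:ℂ))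
    (by simpa using ha) (by simpa using hb)
  rw [key, ← Complex.ofReal_add, Complex.Gamma_ofReal, Complex.Gamma_ofReal,
    Complex.Gamma_ofReal, ← Complex.ofReal_mul, ← Complex.ofReal_mul] at h
  have h' := Complex.ofReal_injective h
  have hG : Gamma (a + b) ≠ 0 := (Gamma_pos_of_pos (by linarith)).ne'
  rw [Beta, eq_div_iff hG]
  linarith [h']

section
variable {c s t : ℝ}

lemma subst_image (hc : 0 < c) : (fun x : ℝ => x / (c * (1 - x))) '' Ioo 0 1 = Ioi 0 := by
  ext u
  constructor
  · rintro ⟨x, ⟨hx0, hx1⟩, rfl⟩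
    exact div_pos hx0 (mul_pos hc (by linarith))
  · intro hu
    have hu' : (0:ℝ) < u := hu
    have hd : (0:ℝ) < 1 + c * u := by positivity
    refine ⟨c * u / (1 + c * u), ⟨by positivity, ?_⟩, ?_⟩
    · rw [div_lt_one hd]; linarith
    · field_simp; ring


lemma subst_injOn (hc : 0 < c) : InjOn (fun x : ℝ => x / (c * (1 - x))) (Ioo 0 1) := by
  rintro x ⟨hx0, hx1⟩ y ⟨hy0, hy1⟩ h
  simp only at h
  have hx : c * (1 - x) ≠ 0 := (mul_pos hc (by linarith)).ne'
  have hy : c * (1 - y) ≠ 0 := (mul_pos hc (by linarith)).ne'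
  field_simp at h
  nlinarith [hc]

lemma subst_deriv (hc : 0 < c) {x : ℝ} (hx : x ∈ Ioo (0:ℝ) 1) :
    HasDerivWithinAt (fun x : ℝ => x / (c * (1 - x))) (c / (c * (1 - x)) ^ 2) (Ioo 0 1) x := by
  obtain ⟨hx0, hx1⟩ := hx
  have hne : c * (1 - x) ≠ 0 := (mul_pos hc (by linarith)).ne'
  have h := (hasDerivAt_id x).div
    (((hasDerivAt_const x (1:ℝ)).sub (hasDerivAt_id x)).const_mul c) hne
  refine h.hasDerivWithinAt.congr_deriv ?_
  simp only [Pi.sub_apply, id]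
  field_simp
  ring
end

lemma subst_pointwise {c s t : ℝ} (hc : 0 < c) {x : ℝ} (hx : x ∈ Ioo (0:ℝ) 1) :
    |c / (c * (1 - x)) ^ 2| • ((x / (c * (1 - x))) ^ (s - 1) *
      (1 + c * (x / (c * (1 - x)))) ^ (-(s + t)))
    = c ^ (-s) * (x ^ (s - 1) * (1 - x) ^ (t - 1)) := by
  obtain ⟨hx0, hx1⟩ := hx
  have hA : (0:ℝ) < 1 - x := by linarith
  have h1 : 1 + c * (x / (c * (1 - x))) = (1 - x)⁻¹ := by
    field_simp
    ring
  rw [smul_eq_mul, h1, abs_of_pos (by positivity),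
    div_rpow hx0.le (by positivity), mul_rpow hc.le hA.le,
    inv_rpow hA.le, ← rpow_neg hA.le, neg_neg,
    div_eq_mul_inv c, mul_pow, ← rpow_natCast c 2, ← rpow_natCast (1-x) 2,
    mul_inv, div_eq_mul_inv, mul_inv,
    ← rpow_neg hc.le, ← rpow_neg hA.le, ← rpow_neg hc.le, ← rpow_neg hA.le]
  rw [show c * (c ^ (-(2:ℕ):ℝ) * (1-x) ^ (-(2:ℕ):ℝ)) * (x ^ (s-1) * (c ^ (-(s-1)) * (1-x) ^ (-(s-1))) * (1-x) ^ (s+t))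
      = (c ^ (1:ℝ) * (c ^ (-(2:ℕ):ℝ) * c ^ (-(s-1)))) * (x ^ (s-1) * ((1-x) ^ (-(2:ℕ):ℝ) * ((1-x) ^ (-(s-1)) * (1-x) ^ (s+t)))) from by rw [rpow_one]; ring,
    ← rpow_add hA, ← rpow_add hA, ← rpow_add hc, ← rpow_add hc]
  norm_num
  ring_nf

lemma F_integrableOn {c s t : ℝ} (hc : 0 < c) (hs : 0 < s) (ht : 0 < t) :
    IntegrableOn (fun u : ℝ => u ^ (s - 1) * (1 + c * u) ^ (-(s + t))) (Ioi 0) := by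
  have h := integrableOn_image_iff_integrableOn_abs_deriv_smul measurableSet_Ioo
    (fun x hx => subst_deriv hc hx) (subst_injOn hc)
    (fun u : ℝ => u ^ (s - 1) * (1 + c * u) ^ (-(s + t)))
  rw [subst_image hc] at h
  rw [h]
  refine IntegrableOn.congr_fun ((betaIntegrand_integrableOn hs ht).const_mul (c ^ (-s)))
    (fun x hx => ?_) measurableSet_Ioo
  exact (subst_pointwise hc hx).symm

lemma F_integral {c s t : ℝ} (hc : 0 < c) (hs : 0 < s) (ht : 0 < t) :
    ∫ u in Ioi (0:ℝ), u ^ (s - 1) * (1 + c * u) ^ (-(s + t)) = c ^ (-s) * Beta s t := by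
  rw [← subst_image hc, integral_image_eq_integral_abs_deriv_smul measurableSet_Ioo
    (fun x hx => subst_deriv hc hx) (subst_injOn hc)]
  rw [setIntegral_congr_fun measurableSet_Ioo (fun x hx => subst_pointwise hc hx)]
  rw [integral_const_mul, betaIntegrand_integral hs ht]

lemma phi_image : (fun p : ℝ × ℝ => (p.2 * p.1, p.2 * (1 - p.1))) '' (Ioo (0:ℝ) 1 ×ˢ Ioi (0:ℝ))
    = Ioi (0:ℝ) ×ˢ Ioi (0:ℝ) := by
  ext ⟨x, y⟩
  constructor
  · rintro ⟨⟨w, u⟩, ⟨⟨hw0, hw1⟩, hu⟩, h⟩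
    obtain ⟨rfl, rfl⟩ := Prod.mk.injEq .. ▸ h
    exact ⟨mul_pos hu hw0, mul_pos hu (sub_pos.mpr hw1)⟩
  · rintro ⟨hx, hy⟩
    have hx' : (0:ℝ) < x := hx
    have hy' : (0:ℝ) < y := hy
    have hxy : (0:ℝ) < x + y := by linarith
    refine ⟨(x / (x + y), x + y), ⟨⟨by positivity, ?_⟩, hxy⟩, ?_⟩
    · rw [div_lt_one hxy]; linarith
    · simp only [Prod.mk.injEq]
      constructor
      · field_simp
      · field_simp; ring

lemma phi_injOn : InjOn (fun p : ℝ × ℝ => (p.2 * p.1, p.2 * (1 - p.1)))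
    (Ioo (0:ℝ) 1 ×ˢ Ioi (0:ℝ)) := by
  rintro ⟨w, u⟩ ⟨⟨hw0, hw1⟩, hu⟩ ⟨w', u'⟩ ⟨⟨hw0', hw1'⟩, hu'⟩ h
  simp only [Prod.mk.injEq] at h
  obtain ⟨h1, h2⟩ := h
  have hu0 : (0:ℝ) < u := hu
  have huu : u = u' := by nlinarith
  subst huu
  have hww : w = w' := mul_left_cancel₀ hu0.ne' h1
  simp [hww]

lemma hasFDerivAt_phi (p : ℝ × ℝ) :
    HasFDerivAt (fun p : ℝ × ℝ => (p.2 * p.1, p.2 * (1 - p.1)))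
      (LinearMap.toContinuousLinearMap (Matrix.toLin (Module.Basis.finTwoProd ℝ) (Module.Basis.finTwoProd ℝ)
        !![p.2, p.1; -p.2, 1 - p.1])) p := by
  rw [Matrix.toLin_finTwoProd_toContinuousLinearMap]
  convert HasFDerivAt.prodMk ((hasFDerivAt_snd (𝕜 := ℝ) (p := p)).mul (hasFDerivAt_fst (𝕜 := ℝ) (p := p)))
    ((hasFDerivAt_snd (𝕜 := ℝ) (p := p)).mul ((hasFDerivAt_const (1:ℝ) p).sub (hasFDerivAt_fst (𝕜 := ℝ) (p := p)))) using 2 <;>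
  · ext q <;> simp <;> ring

lemma phi_det (p : ℝ × ℝ) :
    (LinearMap.toContinuousLinearMap (Matrix.toLin (Module.Basis.finTwoProd ℝ) (Module.Basis.finTwoProd ℝ)
        !![p.2, p.1; -p.2, 1 - p.1])).det = p.2 := by
  simp only [LinearMap.det_toContinuousLinearMap, LinearMap.det_toLin, Matrix.det_fin_two_of]
  ring

lemma key2d (f₁ f₂ : ℝ → ℝ) (h1 : IntegrableOn f₁ (Ioi 0)) (h2 : IntegrableOn f₂ (Ioi 0)) :
    ∫ w in Ioo (0:ℝ) 1, ∫ u in Ioi (0:ℝ), u * (f₁ (u * w) * f₂ (u * (1 - w)))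
      = (∫ x in Ioi (0:ℝ), f₁ x) * ∫ x in Ioi (0:ℝ), f₂ x := by
  set S : Set (ℝ × ℝ) := Ioo (0:ℝ) 1 ×ˢ Ioi (0:ℝ) with hS_def
  have hS : MeasurableSet S := measurableSet_Ioo.prod measurableSet_Ioi
  set g : ℝ × ℝ → ℝ := fun q => f₁ q.1 * f₂ q.2 with hg_def
  set B : ℝ × ℝ → ℝ × ℝ →L[ℝ] ℝ × ℝ := fun p =>
    LinearMap.toContinuousLinearMap (Matrix.toLin (Module.Basis.finTwoProd ℝ) (Module.Basis.finTwoProd ℝ)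
      !![p.2, p.1; -p.2, 1 - p.1]) with hB_def
  have hderiv : ∀ p ∈ S, HasFDerivWithinAt (fun p : ℝ × ℝ => (p.2 * p.1, p.2 * (1 - p.1)))
      (B p) S p := fun p _ => (hasFDerivAt_phi p).hasFDerivWithinAt
  have hg : IntegrableOn g (Ioi (0:ℝ) ×ˢ Ioi (0:ℝ)) := by
    rw [IntegrableOn, Measure.volume_eq_prod, ← Measure.prod_restrict]
    exact h1.mul_prod h2
  have hEq : ∀ p ∈ S, |(B p).det| • g ((fun p : ℝ × ℝ => (p.2 * p.1, p.2 * (1 - p.1))) p)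
      = p.2 * (f₁ (p.2 * p.1) * f₂ (p.2 * (1 - p.1))) := by
    rintro ⟨w, u⟩ ⟨-, hu⟩
    have hu0 : (0:ℝ) < u := hu
    rw [phi_det, smul_eq_mul, abs_of_pos hu0]
  have hKint : IntegrableOn (fun p : ℝ × ℝ => p.2 * (f₁ (p.2 * p.1) * f₂ (p.2 * (1 - p.1)))) S := by
    have h := (integrableOn_image_iff_integrableOn_abs_det_fderiv_smul volume hS hderiv
      phi_injOn g)
    rw [phi_image] at h
    exact IntegrableOn.congr_fun (h.mp hg) hEq hS
  have hchange : ∫ p in S, p.2 * (f₁ (p.2 * p.1) * f₂ (p.2 * (1 - p.1)))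
      = ∫ q in Ioi (0:ℝ) ×ˢ Ioi (0:ℝ), g q := by
    rw [← phi_image, integral_image_eq_integral_abs_det_fderiv_smul volume hS hderiv phi_injOn]
    exact (setIntegral_congr_fun hS hEq).symm
  calc ∫ w in Ioo (0:ℝ) 1, ∫ u in Ioi (0:ℝ), u * (f₁ (u * w) * f₂ (u * (1 - w)))
      = ∫ p in S, p.2 * (f₁ (p.2 * p.1) * f₂ (p.2 * (1 - p.1))) := by
        rw [hS_def, Measure.volume_eq_prod, setIntegral_prod _ ?_]
        rw [← Measure.volume_eq_prod, ← hS_def]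
        exact hKint
    _ = ∫ q in Ioi (0:ℝ) ×ˢ Ioi (0:ℝ), g q := hchange
    _ = (∫ x in Ioi (0:ℝ), f₁ x) * ∫ x in Ioi (0:ℝ), f₂ x := by
        rw [hg_def, Measure.volume_eq_prod, setIntegral_prod_mul]

lemma F_density_integral {c s t : ℝ} (hc : 0 < c) (hs : 0 < s) (ht : 0 < t) :
    ∫ u in Ioi (0:ℝ), (c ^ s / Beta s t) * (u ^ (s - 1) * (1 + c * u) ^ (-(s + t))) = 1 := by
  rw [integral_const_mul, F_integral hc hs ht, rpow_neg hc.le]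
  have hB : Beta s t ≠ 0 := (Beta_pos hs ht).ne'
  have hcs : c ^ s ≠ 0 := (rpow_pos_of_pos hc _).ne'
  field_simp

/-- The joint density `h(u,w)` is a probability density on `(0,∞) × (0,1)`:
`∫₀¹ ∫₀^∞ h(u,w) du dw = 1`. -/
theorem hDens_integrates_to_one (m₁ m₂ ν₁ ν₂ : ℝ)
    (hm₁ : 0 < m₁) (hm₂ : 0 < m₂) (hν₁ : 0 < ν₁) (hν₂ : 0 < ν₂) :
    ∫ w in Ioo (0 : ℝ) 1, ∫ u in Ioi (0 : ℝ),
      ((m₁ / ν₁) ^ (m₁ / 2) * (m₂ / ν₂) ^ (m₂ / 2) /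
          (Beta (m₁ / 2) (ν₁ / 2) * Beta (m₂ / 2) (ν₂ / 2))) *
        u ^ ((m₁ + m₂) / 2 - 1) * w ^ (m₁ / 2 - 1) * (1 - w) ^ (m₂ / 2 - 1) *
        (1 + m₁ * u * w / ν₁) ^ (-(m₁ + ν₁) / 2) *
        (1 + m₂ * u * (1 - w) / ν₂) ^ (-(m₂ + ν₂) / 2) = 1 := by
  have hc₁ : 0 < m₁ / ν₁ := div_pos hm₁ hν₁
  have hc₂ : 0 < m₂ / ν₂ := div_pos hm₂ hν₂
  have hs₁ : 0 < m₁ / 2 := by linarith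
  have ht₁ : 0 < ν₁ / 2 := by linarith
  have hs₂ : 0 < m₂ / 2 := by linarith
  have ht₂ : 0 < ν₂ / 2 := by linarith
  set f₁ : ℝ → ℝ := fun x => ((m₁ / ν₁) ^ (m₁ / 2) / Beta (m₁ / 2) (ν₁ / 2)) *
    (x ^ (m₁ / 2 - 1) * (1 + (m₁ / ν₁) * x) ^ (-(m₁ / 2 + ν₁ / 2))) with hf₁
  set f₂ : ℝ → ℝ := fun x => ((m₂ / ν₂) ^ (m₂ / 2) / Beta (m₂ / 2) (ν₂ / 2)) *
    (x ^ (m₂ / 2 - 1) * (1 + (m₂ / ν₂) * x) ^ (-(m₂ / 2 + ν₂ / 2))) with hf₂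
  have hint₁ : IntegrableOn f₁ (Ioi 0) := (F_integrableOn hc₁ hs₁ ht₁).const_mul _
  have hint₂ : IntegrableOn f₂ (Ioi 0) := (F_integrableOn hc₂ hs₂ ht₂).const_mul _
  have hI₁ : ∫ x in Ioi (0:ℝ), f₁ x = 1 := by
    rw [hf₁]; exact F_density_integral hc₁ hs₁ ht₁
  have hI₂ : ∫ x in Ioi (0:ℝ), f₂ x = 1 := by
    rw [hf₂]; exact F_density_integral hc₂ hs₂ ht₂
  have key := key2d f₁ f₂ hint₁ hint₂
  rw [hI₁, hI₂, mul_one] at key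
  refine Eq.trans ?_ key
  refine setIntegral_congr_fun measurableSet_Ioo (fun w hw => ?_)
  refine setIntegral_congr_fun measurableSet_Ioi (fun u hu => ?_)
  obtain ⟨hw0, hw1⟩ := hw
  have hu0 : (0:ℝ) < u := hu
  have h1w : (0:ℝ) < 1 - w := by linarith
  simp only [hf₁, hf₂]
  rw [mul_rpow hu0.le hw0.le, mul_rpow hu0.le h1w.le,
    show (1 + m₁ * u * w / ν₁) = (1 + m₁ / ν₁ * (u * w)) from by ring,
    show (1 + m₂ * u * (1 - w) / ν₂) = (1 + m₂ / ν₂ * (u * (1 - w))) from by ring,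
    show (-(m₁ + ν₁) / 2) = (-(m₁ / 2 + ν₁ / 2)) from by ring,
    show (-(m₂ + ν₂) / 2) = (-(m₂ / 2 + ν₂ / 2)) from by ring,
    show ((m₁ + m₂) / 2 - 1) = (m₁ / 2 - 1) + ((m₂ / 2 - 1) + 1) from by ring,
    rpow_add hu0, rpow_add hu0, rpow_one]
  ring
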